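/- Let B and M be real symmetric L×L matrices and let λ ∈ ℝ^L have nonnegative entries. Then the spectral radius of Diag(√λ)(B⊙M)Diag(√λ) is at most the square root of the product of the spectral radius of Diag(√λ)(B⊙B)Diag(√λ) and the spectral radius of Diag(√λ)(M⊙M)Diag(√λ). -/

import Mathlib

open Matrix
open scoped ENNReal RealInnerProductSpace

/-- The spectral radius of a real square matrix: the supremum of the norms of its complex
eigenvalues, i.e. the spectral radius of the matrix viewed over `ℂ`. -/
noncomputable def matSpecRad {L : ℕ} (A : Matrix (Fin L) (Fin L) ℝ) : ℝ≥0∞ :=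
  spectralRadius ℂ (A.map (fun x : ℝ => (x : ℂ)))

namespace Stmt14Aux

variable {L : ℕ}

lemma herm_of_transpose {A : Matrix (Fin L) (Fin L) ℝ} (hA : Aᵀ = A) : A.IsHermitian := by
  ext i j
  simpa using congrFun (congrFun hA i) j

lemma mapC_herm {A : Matrix (Fin L) (Fin L) ℝ} (hA : A.IsHermitian) :
    (A.map (fun x : ℝ => (x : ℂ))).IsHermitian := by
  ext i j
  simpa using congrFun (congrFun hA i) j

lemma spectrum_real_map {A : Matrix (Fin L) (Fin L) ℝ} :
    spectrum ℝ (A.map (fun x : ℝ => (x : ℂ))) = spectrum ℝ A := by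
  ext r
  rw [spectrum.mem_iff, spectrum.mem_iff]
  have hmap : (algebraMap ℝ (Matrix (Fin L) (Fin L) ℂ) r) - A.map (fun x : ℝ => (x : ℂ))
      = ((algebraMap ℝ (Matrix (Fin L) (Fin L) ℝ) r) - A).map (fun x : ℝ => (x : ℂ)) := by
    ext i j
    by_cases h : i = j <;>
      simp [Matrix.algebraMap_matrix_apply, h]
  rw [hmap]
  rw [Matrix.isUnit_iff_isUnit_det, Matrix.isUnit_iff_isUnit_det]
  rw [show ((algebraMap ℝ (Matrix (Fin L) (Fin L) ℝ) r) - A).map (fun x : ℝ => (x : ℂ))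
      = (Complex.ofRealHom.mapMatrix ((algebraMap ℝ (Matrix (Fin L) (Fin L) ℝ) r) - A)) from rfl]
  rw [← RingHom.map_det]
  simp [isUnit_iff_ne_zero]

lemma matSpecRad_eq_iSup {A : Matrix (Fin L) (Fin L) ℝ} (hA : A.IsHermitian) :
    matSpecRad A = ⨆ i, (‖hA.eigenvalues i‖₊ : ℝ≥0∞) := by
  have hAc := mapC_herm hA
  have hspec : spectrum ℂ (A.map (fun x : ℝ => (x : ℂ)))
      = Set.range (fun i => (hAc.eigenvalues i : ℂ)) := by
    rw [hAc.spectrum_eq_image_range]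
    ext z
    simp [Function.comp]
  have hr : Set.range hAc.eigenvalues = Set.range hA.eigenvalues := by
    rw [hAc.spectrum_real_eq_range_eigenvalues.symm, hA.spectrum_real_eq_range_eigenvalues.symm,
      spectrum_real_map]
  calc matSpecRad A = ⨆ k ∈ spectrum ℂ (A.map (fun x : ℝ => (x : ℂ))), (‖k‖₊ : ℝ≥0∞) := rfl
    _ = ⨆ i, (‖(hAc.eigenvalues i : ℂ)‖₊ : ℝ≥0∞) := by rw [hspec, iSup_range]
    _ = ⨆ i, (‖hAc.eigenvalues i‖₊ : ℝ≥0∞) := by simp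
    _ = ⨆ x ∈ Set.range hAc.eigenvalues, (‖x‖₊ : ℝ≥0∞) := by rw [iSup_range]
    _ = ⨆ x ∈ Set.range hA.eigenvalues, (‖x‖₊ : ℝ≥0∞) := by rw [hr]
    _ = ⨆ i, (‖hA.eigenvalues i‖₊ : ℝ≥0∞) := by rw [iSup_range]

lemma rayleigh {A : Matrix (Fin L) (Fin L) ℝ} (hA : A.IsHermitian) {r : ℝ}
    (hr : ∀ i, |hA.eigenvalues i| ≤ r) (y : Fin L → ℝ) :
    |∑ i, y i * (A *ᵥ y) i| ≤ r * ∑ i, y i * y i := by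
  set U : Matrix (Fin L) (Fin L) ℝ := (hA.eigenvectorUnitary : Matrix (Fin L) (Fin L) ℝ) with hU
  have hUU : U * star U = 1 := (Matrix.mem_unitaryGroup_iff).mp hA.eigenvectorUnitary.2
  set z : Fin L → ℝ := star U *ᵥ y with hz
  have key : ∀ d : Fin L → ℝ, y ⬝ᵥ ((U * diagonal d * star U) *ᵥ y) = ∑ j, d j * (z j * z j) := by
    intro d
    rw [← mulVec_mulVec, ← mulVec_mulVec, dotProduct_mulVec]
    have hyU : y ᵥ* U = z := by
      rw [hz, Matrix.star_eq_conjTranspose, conjTranspose_eq_transpose_of_trivial,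
        ← vecMul_transpose, transpose_transpose]
    rw [hyU]
    simp [dotProduct, mulVec_diagonal]
    exact Finset.sum_congr rfl fun j _ => by ring
  have h1 : ∑ i, y i * (A *ᵥ y) i = ∑ j, hA.eigenvalues j * (z j * z j) := by
    have := key (hA.eigenvalues)
    rw [← this]
    congr 1
    conv_lhs => rw [hA.spectral_theorem]
    rfl
  have h2 : ∑ i, y i * y i = ∑ j, z j * z j := by
    have := key (fun _ => 1)
    simp only [diagonal_one, mul_one, one_mul] at this
    rw [hUU] at this
    simpa [dotProduct, one_mulVec] using this
  rw [h1, h2]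
  calc |∑ j, hA.eigenvalues j * (z j * z j)| ≤ ∑ j, |hA.eigenvalues j * (z j * z j)| :=
        Finset.abs_sum_le_sum_abs _ _
    _ ≤ ∑ j, r * (z j * z j) := by
        apply Finset.sum_le_sum
        intro j _
        rw [abs_mul, abs_of_nonneg (mul_self_nonneg (z j))]
        exact mul_le_mul_of_nonneg_right (hr j) (mul_self_nonneg _)
    _ = r * ∑ j, z j * z j := by rw [Finset.mul_sum]

lemma key (hL : 0 < L) {A : Matrix (Fin L) (Fin L) ℝ} (hA : A.IsHermitian) :
    ∃ r : ℝ, 0 ≤ r ∧ matSpecRad A = ENNReal.ofReal r ∧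
      (∃ x : Fin L → ℝ, (∑ i, x i * x i) = 1 ∧ |∑ i, x i * (A *ᵥ x) i| = r) ∧
      (∀ y : Fin L → ℝ, |∑ i, y i * (A *ᵥ y) i| ≤ r * ∑ i, y i * y i) := by
  haveI : Nonempty (Fin L) := ⟨⟨0, hL⟩⟩
  obtain ⟨i₀, hi₀⟩ := Finite.exists_max (fun i => |hA.eigenvalues i|)
  refine ⟨|hA.eigenvalues i₀|, abs_nonneg _, ?_, ?_, rayleigh hA hi₀⟩
  · rw [matSpecRad_eq_iSup hA, ← Real.enorm_eq_ofReal_abs]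
    apply le_antisymm
    · refine iSup_le fun i => ENNReal.coe_le_coe.2 ?_
      rw [← NNReal.coe_le_coe]
      simpa [Real.norm_eq_abs] using hi₀ i
    · exact le_iSup (fun i => ((‖hA.eigenvalues i‖₊ : ℝ≥0∞))) i₀
  · refine ⟨⇑(hA.eigenvectorBasis i₀), ?_, ?_⟩
    · have h1 : ‖hA.eigenvectorBasis i₀‖ = 1 := hA.eigenvectorBasis.orthonormal.1 i₀
      have h2 : ⟪hA.eigenvectorBasis i₀, hA.eigenvectorBasis i₀⟫
          = ∑ i, hA.eigenvectorBasis i₀ i * hA.eigenvectorBasis i₀ i := by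
        simp only [PiLp.inner_apply, RCLike.inner_apply, conj_trivial, mul_comm]
      rw [← h2, real_inner_self_eq_norm_sq, h1]; norm_num
    · have hme := hA.mulVec_eigenvectorBasis i₀
      rw [hme]
      have h2 : ⟪hA.eigenvectorBasis i₀, hA.eigenvectorBasis i₀⟫
          = ∑ i, hA.eigenvectorBasis i₀ i * hA.eigenvectorBasis i₀ i := by
        simp only [PiLp.inner_apply, RCLike.inner_apply, conj_trivial, mul_comm]
      have h3 : ∑ i, (hA.eigenvectorBasis i₀) i *
            (hA.eigenvalues i₀ • ⇑(hA.eigenvectorBasis i₀)) i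
          = hA.eigenvalues i₀ * ∑ i, hA.eigenvectorBasis i₀ i * hA.eigenvectorBasis i₀ i := by
        rw [Finset.mul_sum]
        refine Finset.sum_congr rfl fun i _ => ?_
        simp [Pi.smul_apply, smul_eq_mul]; ring
      rw [h3, ← h2, real_inner_self_eq_norm_sq, hA.eigenvectorBasis.orthonormal.1 i₀]
      norm_num

lemma core_cs (lam : Fin L → ℝ) (B M : Matrix (Fin L) (Fin L) ℝ)
    (x : Fin L → ℝ) :
    |∑ i, x i * ((Matrix.diagonal (fun l => Real.sqrt (lam l)) * Matrix.hadamard B M *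
        Matrix.diagonal (fun l => Real.sqrt (lam l))) *ᵥ x) i| ≤
      Real.sqrt ((∑ i, |x i| * ((Matrix.diagonal (fun l => Real.sqrt (lam l)) *
            Matrix.hadamard B B * Matrix.diagonal (fun l => Real.sqrt (lam l))) *ᵥ
            (fun j => |x j|)) i) *
        (∑ i, |x i| * ((Matrix.diagonal (fun l => Real.sqrt (lam l)) *
            Matrix.hadamard M M * Matrix.diagonal (fun l => Real.sqrt (lam l))) *ᵥ
            (fun j => |x j|)) i)) := by
  set C := Matrix.diagonal (fun l => Real.sqrt (lam l)) * Matrix.hadamard B M *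
      Matrix.diagonal (fun l => Real.sqrt (lam l)) with hC
  set P := Matrix.diagonal (fun l => Real.sqrt (lam l)) * Matrix.hadamard B B *
      Matrix.diagonal (fun l => Real.sqrt (lam l)) with hP
  set Q := Matrix.diagonal (fun l => Real.sqrt (lam l)) * Matrix.hadamard M M *
      Matrix.diagonal (fun l => Real.sqrt (lam l)) with hQ
  set y : Fin L → ℝ := fun i => |x i| with hy
  have entryC : ∀ i j, C i j = Real.sqrt (lam i) * (B i j * M i j) * Real.sqrt (lam j) := by
    intro i j; simp [hC, Matrix.mul_diagonal, Matrix.diagonal_mul, Matrix.hadamard_apply]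
  have entryP : ∀ i j, P i j = Real.sqrt (lam i) * (B i j * B i j) * Real.sqrt (lam j) := by
    intro i j; simp [hP, Matrix.mul_diagonal, Matrix.diagonal_mul, Matrix.hadamard_apply]
  have entryQ : ∀ i j, Q i j = Real.sqrt (lam i) * (M i j * M i j) * Real.sqrt (lam j) := by
    intro i j; simp [hQ, Matrix.mul_diagonal, Matrix.diagonal_mul, Matrix.hadamard_apply]
  set s : Fin L → ℝ := fun i => Real.sqrt (Real.sqrt (lam i) * |x i|) with hs
  have hs2 : ∀ i, s i * s i = Real.sqrt (lam i) * |x i| := fun i =>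
    Real.mul_self_sqrt (mul_nonneg (Real.sqrt_nonneg _) (abs_nonneg _))
  have hs0 : ∀ i, 0 ≤ s i := fun i => Real.sqrt_nonneg _
  set f : Fin L × Fin L → ℝ := fun p => |B p.1 p.2| * (s p.1 * s p.2) with hf
  set g : Fin L × Fin L → ℝ := fun p => |M p.1 p.2| * (s p.1 * s p.2) with hg
  have hf0 : ∀ p, 0 ≤ f p := fun p => mul_nonneg (abs_nonneg _) (mul_nonneg (hs0 _) (hs0 _))
  have hg0 : ∀ p, 0 ≤ g p := fun p => mul_nonneg (abs_nonneg _) (mul_nonneg (hs0 _) (hs0 _))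
  have expand : ∀ (S : Matrix (Fin L) (Fin L) ℝ) (v : Fin L → ℝ),
      ∑ i, v i * (S *ᵥ v) i = ∑ p : Fin L × Fin L, S p.1 p.2 * v p.1 * v p.2 := by
    intro S v
    rw [Fintype.sum_prod_type]
    refine Finset.sum_congr rfl fun i _ => ?_
    simp only [Matrix.mulVec, dotProduct, Finset.mul_sum]
    exact Finset.sum_congr rfl fun j _ => by ring
  have hCfg : ∀ p : Fin L × Fin L, |C p.1 p.2 * x p.1 * x p.2| = f p * g p := by
    intro ⟨i, j⟩
    simp only [entryC, hf, hg]
    simp only [abs_mul]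
    rw [abs_of_nonneg (Real.sqrt_nonneg (lam i)), abs_of_nonneg (Real.sqrt_nonneg (lam j))]
    have e : |B i j| * (s i * s j) * (|M i j| * (s i * s j))
        = (|B i j| * |M i j|) * ((s i * s i) * (s j * s j)) := by ring
    rw [e, hs2 i, hs2 j]; ring
  have hPf : ∀ p : Fin L × Fin L, P p.1 p.2 * y p.1 * y p.2 = f p ^ 2 := by
    intro ⟨i, j⟩
    simp only [entryP, hf, hy]
    have hB : |B i j| * |B i j| = B i j * B i j := by rw [← abs_mul, abs_mul_self]
    have e : (|B i j| * (s i * s j)) ^ 2 = (|B i j| * |B i j|) * ((s i * s i) * (s j * s j)) := by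
      ring
    rw [e, hB, hs2 i, hs2 j]; ring
  have hQg : ∀ p : Fin L × Fin L, Q p.1 p.2 * y p.1 * y p.2 = g p ^ 2 := by
    intro ⟨i, j⟩
    simp only [entryQ, hg, hy]
    have hM : |M i j| * |M i j| = M i j * M i j := by rw [← abs_mul, abs_mul_self]
    have e : (|M i j| * (s i * s j)) ^ 2 = (|M i j| * |M i j|) * ((s i * s i) * (s j * s j)) := by
      ring
    rw [e, hM, hs2 i, hs2 j]; ring
  have hfg : ∑ p : Fin L × Fin L, f p * g p ≤
      Real.sqrt ((∑ p : Fin L × Fin L, f p ^ 2) * (∑ p : Fin L × Fin L, g p ^ 2)) := by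
    rw [Real.le_sqrt (Finset.sum_nonneg fun p _ => mul_nonneg (hf0 p) (hg0 p))]
    · exact Finset.sum_mul_sq_le_sq_mul_sq _ _ _
    · exact mul_nonneg (Finset.sum_nonneg fun p _ => sq_nonneg _)
        (Finset.sum_nonneg fun p _ => sq_nonneg _)
  calc |∑ i, x i * (C *ᵥ x) i| = |∑ p : Fin L × Fin L, C p.1 p.2 * x p.1 * x p.2| := by
        rw [expand]
    _ ≤ ∑ p : Fin L × Fin L, |C p.1 p.2 * x p.1 * x p.2| := Finset.abs_sum_le_sum_abs _ _
    _ = ∑ p : Fin L × Fin L, f p * g p := Finset.sum_congr rfl fun p _ => hCfg p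
    _ ≤ Real.sqrt ((∑ p : Fin L × Fin L, f p ^ 2) * (∑ p : Fin L × Fin L, g p ^ 2)) := hfg
    _ = Real.sqrt ((∑ i, y i * (P *ᵥ y) i) * (∑ i, y i * (Q *ᵥ y) i)) := by
        rw [expand P y, expand Q y,
          Finset.sum_congr rfl fun p _ => hPf p, Finset.sum_congr rfl fun p _ => hQg p]

lemma quad_nonneg {S : Matrix (Fin L) (Fin L) ℝ} (hS : ∀ i j, 0 ≤ S i j)
    {v : Fin L → ℝ} (hv : ∀ i, 0 ≤ v i) : 0 ≤ ∑ i, v i * (S *ᵥ v) i := by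
  refine Finset.sum_nonneg fun i _ => mul_nonneg (hv i) ?_
  show 0 ≤ ∑ j, S i j * v j
  exact Finset.sum_nonneg fun j _ => mul_nonneg (hS i j) (hv j)

end Stmt14Aux

/-- for real symmetric `B`, `M` and entrywise nonnegative `λ`,
the spectral radius of `Diag(√λ)(B⊙M)Diag(√λ)` is at most the square root of the product
of the spectral radii of `Diag(√λ)(B⊙B)Diag(√λ)` and `Diag(√λ)(M⊙M)Diag(√λ)`. -/
theorem stmt14 {L : ℕ} (hL : 0 < L) (lam : Fin L → ℝ) (hlam : ∀ l, 0 ≤ lam l)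
    (B M : Matrix (Fin L) (Fin L) ℝ) (hB : Bᵀ = B) (hM : Mᵀ = M) :
    matSpecRad (Matrix.diagonal (fun l => Real.sqrt (lam l)) * Matrix.hadamard B M *
        Matrix.diagonal (fun l => Real.sqrt (lam l)))
      ≤ (matSpecRad (Matrix.diagonal (fun l => Real.sqrt (lam l)) * Matrix.hadamard B B *
            Matrix.diagonal (fun l => Real.sqrt (lam l))) *
          matSpecRad (Matrix.diagonal (fun l => Real.sqrt (lam l)) * Matrix.hadamard M M *
            Matrix.diagonal (fun l => Real.sqrt (lam l)))) ^ (1 / 2 : ℝ) := by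
  classical
  set D := Matrix.diagonal (fun l => Real.sqrt (lam l)) with hD
  have hDT : Dᵀ = D := Matrix.diagonal_transpose _
  have sandTrans : ∀ S : Matrix (Fin L) (Fin L) ℝ, Sᵀ = S → (D * S * D)ᵀ = D * S * D := by
    intro S hS
    rw [Matrix.transpose_mul, Matrix.transpose_mul, hDT, hS, mul_assoc]
  have hBe : ∀ i j, B j i = B i j := by
    intro i j; conv_lhs => rw [← hB]
    exact rfl
  have hMe : ∀ i j, M j i = M i j := by
    intro i j; conv_lhs => rw [← hM]
    exact rfl
  have hBMt : (Matrix.hadamard B M)ᵀ = Matrix.hadamard B M := by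
    ext i j
    simp only [Matrix.transpose_apply, Matrix.hadamard_apply, hBe i j, hMe i j]
  have hBBt : (Matrix.hadamard B B)ᵀ = Matrix.hadamard B B := by
    ext i j
    simp only [Matrix.transpose_apply, Matrix.hadamard_apply, hBe i j]
  have hMMt : (Matrix.hadamard M M)ᵀ = Matrix.hadamard M M := by
    ext i j
    simp only [Matrix.transpose_apply, Matrix.hadamard_apply, hMe i j]
  have hermC : (D * Matrix.hadamard B M * D).IsHermitian :=
    Stmt14Aux.herm_of_transpose (sandTrans _ hBMt)
  have hermP : (D * Matrix.hadamard B B * D).IsHermitian :=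
    Stmt14Aux.herm_of_transpose (sandTrans _ hBBt)
  have hermQ : (D * Matrix.hadamard M M * D).IsHermitian :=
    Stmt14Aux.herm_of_transpose (sandTrans _ hMMt)
  obtain ⟨rC, hrC0, hrCspec, ⟨x, hx1, hx2⟩, -⟩ := Stmt14Aux.key hL hermC
  obtain ⟨rP, hrP0, hrPspec, -, hrPbound⟩ := Stmt14Aux.key hL hermP
  obtain ⟨rQ, hrQ0, hrQspec, -, hrQbound⟩ := Stmt14Aux.key hL hermQ
  -- the real inequality
  set y : Fin L → ℝ := fun i => |x i| with hy
  have hyy : ∑ i, y i * y i = 1 := by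
    rw [← hx1]
    exact Finset.sum_congr rfl fun i _ => abs_mul_abs_self (x i)
  have hPentry : ∀ i j, 0 ≤ (D * Matrix.hadamard B B * D) i j := by
    intro i j
    have : (D * Matrix.hadamard B B * D) i j
        = Real.sqrt (lam i) * (B i j * B i j) * Real.sqrt (lam j) := by
      simp [hD, Matrix.mul_diagonal, Matrix.diagonal_mul, Matrix.hadamard_apply]
    rw [this]
    exact mul_nonneg (mul_nonneg (Real.sqrt_nonneg _) (mul_self_nonneg _)) (Real.sqrt_nonneg _)
  have hQentry : ∀ i j, 0 ≤ (D * Matrix.hadamard M M * D) i j := by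
    intro i j
    have : (D * Matrix.hadamard M M * D) i j
        = Real.sqrt (lam i) * (M i j * M i j) * Real.sqrt (lam j) := by
      simp [hD, Matrix.mul_diagonal, Matrix.diagonal_mul, Matrix.hadamard_apply]
    rw [this]
    exact mul_nonneg (mul_nonneg (Real.sqrt_nonneg _) (mul_self_nonneg _)) (Real.sqrt_nonneg _)
  have hyn : ∀ i, 0 ≤ y i := fun i => abs_nonneg _
  have hPq0 : 0 ≤ ∑ i, y i * ((D * Matrix.hadamard B B * D) *ᵥ y) i :=
    Stmt14Aux.quad_nonneg hPentry hyn
  have hQq0 : 0 ≤ ∑ i, y i * ((D * Matrix.hadamard M M * D) *ᵥ y) i :=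
    Stmt14Aux.quad_nonneg hQentry hyn
  have hPq : ∑ i, y i * ((D * Matrix.hadamard B B * D) *ᵥ y) i ≤ rP := by
    calc ∑ i, y i * ((D * Matrix.hadamard B B * D) *ᵥ y) i
        ≤ |∑ i, y i * ((D * Matrix.hadamard B B * D) *ᵥ y) i| := le_abs_self _
      _ ≤ rP * ∑ i, y i * y i := hrPbound y
      _ = rP := by rw [hyy, mul_one]
  have hQq : ∑ i, y i * ((D * Matrix.hadamard M M * D) *ᵥ y) i ≤ rQ := by
    calc ∑ i, y i * ((D * Matrix.hadamard M M * D) *ᵥ y) i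
        ≤ |∑ i, y i * ((D * Matrix.hadamard M M * D) *ᵥ y) i| := le_abs_self _
      _ ≤ rQ * ∑ i, y i * y i := hrQbound y
      _ = rQ := by rw [hyy, mul_one]
  have hreal : rC ≤ Real.sqrt (rP * rQ) := by
    rw [← hx2]
    calc |∑ i, x i * ((D * Matrix.hadamard B M * D) *ᵥ x) i|
        ≤ Real.sqrt ((∑ i, y i * ((D * Matrix.hadamard B B * D) *ᵥ y) i) *
            (∑ i, y i * ((D * Matrix.hadamard M M * D) *ᵥ y) i)) :=
          Stmt14Aux.core_cs lam B M x
      _ ≤ Real.sqrt (rP * rQ) :=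
          Real.sqrt_le_sqrt (mul_le_mul hPq hQq hQq0 hrP0)
  rw [hrCspec, hrPspec, hrQspec, ← ENNReal.ofReal_mul hrP0,
    ENNReal.ofReal_rpow_of_nonneg (mul_nonneg hrP0 hrQ0) (by norm_num)]
  exact ENNReal.ofReal_le_ofReal (by rwa [← Real.sqrt_eq_rpow])
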